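/- The function f₀(u,v) = (1 + 2√3 v)(1 + 3u − √3 v)(1 − 3u − √3 v) has exactly one critical point in the open triangle T₀ with vertices (−1/2, −√3/6), (1/2, −√3/6), (0, √3/3), namely the origin (0,0). -/

import Mathlib

open Real

/-- Partial derivative in the first variable. -/
noncomputable def pdx (f : ℝ × ℝ → ℝ) (p : ℝ × ℝ) : ℝ :=
  deriv (fun x => f (x, p.2)) p.1

/-- Partial derivative in the second variable. -/
noncomputable def pdy (f : ℝ × ℝ → ℝ) (p : ℝ × ℝ) : ℝ :=
  deriv (fun y => f (p.1, y)) p.2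

/-- The torsion function of the equilateral triangle `T₀`. -/
noncomputable def f0 (p : ℝ × ℝ) : ℝ :=
  (1 + 2 * Real.sqrt 3 * p.2) * (1 + 3 * p.1 - Real.sqrt 3 * p.2)
    * (1 - 3 * p.1 - Real.sqrt 3 * p.2)

/-- The open equilateral triangle `T₀` with vertices `(−1/2, −√3/6)`,
`(1/2, −√3/6)`, `(0, √3/3)`. -/
noncomputable def T0 : Set (ℝ × ℝ) :=
  {p | 0 < 1 + 2 * Real.sqrt 3 * p.2 ∧ 0 < 1 + 3 * p.1 - Real.sqrt 3 * p.2 ∧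
       0 < 1 - 3 * p.1 - Real.sqrt 3 * p.2}

lemma pdx_f0 (u v : ℝ) :
    pdx f0 (u, v) = (1 + 2 * Real.sqrt 3 * v) * (-18 * u) := by
  set s := Real.sqrt 3
  have hB : HasDerivAt (fun x : ℝ => 1 + 3 * x - s * v) 3 u := by
    simpa using (((hasDerivAt_id u).const_mul 3).const_add 1).sub_const (s * v)
  have hC : HasDerivAt (fun x : ℝ => 1 - 3 * x - s * v) (-3) u := by
    simpa using (((hasDerivAt_id u).const_mul 3).const_sub 1).sub_const (s * v)
  have h1 : HasDerivAt (fun x : ℝ => (1 + 2 * s * v) * (1 + 3 * x - s * v))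
      ((1 + 2 * s * v) * 3) u := hB.const_mul _
  have h := h1.mul hC
  have hd : pdx f0 (u, v) =
      (1 + 2 * s * v) * 3 * (1 - 3 * u - s * v) +
        (1 + 2 * s * v) * (1 + 3 * u - s * v) * (-3) := by
    exact h.deriv
  rw [hd]; ring

lemma pdy_f0 (u v : ℝ) :
    pdy f0 (u, v) =
      2 * Real.sqrt 3 * ((1 + 3 * u - Real.sqrt 3 * v) * (1 - 3 * u - Real.sqrt 3 * v))
        - Real.sqrt 3 * ((1 + 2 * Real.sqrt 3 * v) * (1 - 3 * u - Real.sqrt 3 * v))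
        - Real.sqrt 3 * ((1 + 2 * Real.sqrt 3 * v) * (1 + 3 * u - Real.sqrt 3 * v)) := by
  set s := Real.sqrt 3
  have hA : HasDerivAt (fun y : ℝ => 1 + 2 * s * y) (2 * s) v := by
    simpa using ((hasDerivAt_id v).const_mul (2 * s)).const_add 1
  have hB : HasDerivAt (fun y : ℝ => 1 + 3 * u - s * y) (-s) v := by
    simpa using ((hasDerivAt_id v).const_mul s).const_sub (1 + 3 * u)
  have hC : HasDerivAt (fun y : ℝ => 1 - 3 * u - s * y) (-s) v := by
    simpa using ((hasDerivAt_id v).const_mul s).const_sub (1 - 3 * u)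
  have h := (hA.mul hB).mul hC
  have hd : pdy f0 (u, v) =
      (2 * s * (1 + 3 * u - s * v) + (1 + 2 * s * v) * (-s)) * (1 - 3 * u - s * v)
        + (1 + 2 * s * v) * (1 + 3 * u - s * v) * (-s) := by
    exact h.deriv
  rw [hd]; ring

/-- `f₀` has exactly one critical point in the open triangle `T₀`,
namely the origin. -/
theorem f0_unique_critical_point :
    ∀ p ∈ T0, (pdx f0 p = 0 ∧ pdy f0 p = 0) ↔ p = ((0 : ℝ), (0 : ℝ)) := by
  rintro ⟨u, v⟩ ⟨h1, h2, h3⟩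
  simp only [T0] at *
  have hs : Real.sqrt 3 ^ 2 = 3 := Real.sq_sqrt (by norm_num)
  have hs0 : (0:ℝ) < Real.sqrt 3 := Real.sqrt_pos.mpr (by norm_num)
  constructor
  · rintro ⟨hx, hy⟩
    rw [pdx_f0] at hx
    rw [pdy_f0] at hy
    have hu : u = 0 := by
      rcases mul_eq_zero.mp hx with h | h
      · linarith
      · linarith
    subst hu
    have hv : v = 0 := by
      -- hy: 2s(1-sv)^2 - 2s(1+2sv)(1-sv) = -6 s^2 v (1 - s v) = -18 v (1 - s v) = 0
      have key : (18 : ℝ) * v * (1 - Real.sqrt 3 * v) = 0 := by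
        nlinarith [hy, hs, hs0]
      have h2' : (0:ℝ) < 1 - Real.sqrt 3 * v := by linarith
      rcases mul_eq_zero.mp key with h | h
      · rcases mul_eq_zero.mp h with h' | h'
        · norm_num at h'
        · exact h'
      · linarith
    simp [hv]
  · rintro h
    simp only [Prod.mk.injEq] at h
    obtain ⟨rfl, rfl⟩ := h
    refine ⟨?_, ?_⟩
    · rw [pdx_f0]; ring
    · rw [pdy_f0]; ring
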